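/- Let h > 0 and ν > 3. Then lim_{λ → 0⁺} ∑_{(n,m) ∈ ℤ×ℤ} (1+n²)^{−ν/2}·(1+m²)^{−ν/2} · ( sin(2·|n−m|·arcsin((h/2)·√λ)) / (√λ·√(4/h² − λ)) − (h²/2)·|n−m| )² = 0; that is, as λ decreases to 0 through values in (0, 4/h²), the real part kernel of the boundary resolvent, namely −sin(2·|n−m|·arcsin((h/2)·√λ))/(√λ·√(4/h²−λ)), converges in the weighted ℓ²(ℤ×ℤ) sense to the kernel −(h²/2)·|n−m|. -/

import Mathlib

open Filter

/-- Summability of `(1+n²)^s` over `ℤ` for `s < -1/2`. -/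
lemma aux_sumZ {s : ℝ} (hs : s < -(1/2)) :
    Summable (fun n : ℤ => (1 + (n : ℝ) ^ 2) ^ s) := by
  have hb : 1 < -(2 * s) := by linarith
  have h1 : Summable (fun n : ℤ => |(n : ℝ)| ^ (2 * s)) := by
    simpa using Real.summable_abs_int_rpow hb
  have h2 : Summable (fun n : ℤ => if n = 0 then (1 : ℝ) else 0) :=
    summable_of_ne_finset_zero (s := {0}) (fun n hn => if_neg (by simpa using hn))
  refine Summable.of_nonneg_of_le (fun n => Real.rpow_nonneg (by positivity) s)
    (fun n => ?_) (h1.add h2)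
  by_cases hn : n = 0
  · subst hn
    simp [Real.zero_rpow (by intro hc; rw [hc] at hb; norm_num at hb : 2 * s ≠ 0)]
  · have hn0 : ((n : ℝ)) ≠ 0 := Int.cast_ne_zero.mpr hn
    have hn' : (0 : ℝ) < (n : ℝ) ^ 2 := by positivity
    have h3 : (1 + (n : ℝ) ^ 2) ^ s ≤ ((n : ℝ) ^ 2) ^ s :=
      Real.rpow_le_rpow_of_nonpos hn' (by linarith) (by linarith)
    have h4 : ((n : ℝ) ^ 2) ^ s = |(n : ℝ)| ^ (2 * s) := by
      rw [← sq_abs, ← Real.rpow_natCast |(n : ℝ)| 2, ← Real.rpow_mul (abs_nonneg _)]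
      norm_num
    simp only [if_neg hn]
    linarith [h3, h4.symm.le]

set_option maxHeartbeats 2000000 in
theorem stmt_10 (h ν : ℝ) (hh : 0 < h) (hν : 3 < ν) :
    Tendsto
      (fun l : ℝ => ∑' p : ℤ × ℤ,
        (1 + (p.1 : ℝ) ^ 2) ^ (-(ν / 2)) * (1 + (p.2 : ℝ) ^ 2) ^ (-(ν / 2)) *
          (Real.sin (2 * ((|p.1 - p.2| : ℤ) : ℝ) * Real.arcsin (h / 2 * Real.sqrt l)) /
              (Real.sqrt l * Real.sqrt (4 / h ^ 2 - l)) -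
            h ^ 2 / 2 * ((|p.1 - p.2| : ℤ) : ℝ)) ^ 2)
      (nhdsWithin 0 (Set.Ioo 0 (4 / h ^ 2))) (nhds 0) := by
  have hh2 : (0 : ℝ) < h ^ 2 := by positivity
  set S : Set ℝ := Set.Ioo 0 (4 / h ^ 2) with hS
  set 𝓕 : Filter ℝ := nhdsWithin 0 S with h𝓕
  set C : ℝ := 3 * h ^ 2 with hC
  set B : ℤ × ℤ → ℝ := fun p =>
    C ^ 2 * 2 * ((1 + (p.1 : ℝ) ^ 2) ^ (-(ν / 2) + 1) * (1 + (p.2 : ℝ) ^ 2) ^ (-(ν / 2) + 1))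
    with hB
  -- summability of the bound
  have hBsum : Summable B := by
    have hs : (-(ν / 2) + 1 : ℝ) < -(1/2) := by linarith
    exact (((aux_sumZ hs).mul_of_nonneg (aux_sumZ hs)
      (fun n => Real.rpow_nonneg (by positivity) _)
      (fun n => Real.rpow_nonneg (by positivity) _)).mul_left (C ^ 2 * 2))
  -- pointwise limits
  have hlim : ∀ p : ℤ × ℤ, Tendsto (fun l : ℝ =>
      (1 + (p.1 : ℝ) ^ 2) ^ (-(ν / 2)) * (1 + (p.2 : ℝ) ^ 2) ^ (-(ν / 2)) *
        (Real.sin (2 * ((|p.1 - p.2| : ℤ) : ℝ) * Real.arcsin (h / 2 * Real.sqrt l)) /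
            (Real.sqrt l * Real.sqrt (4 / h ^ 2 - l)) -
          h ^ 2 / 2 * ((|p.1 - p.2| : ℤ) : ℝ)) ^ 2) 𝓕 (nhds 0) := by
    intro p
    set k : ℝ := ((|p.1 - p.2| : ℤ) : ℝ) with hk
    set g : ℝ → ℝ := fun t => Real.sin (2 * k * Real.arcsin (h / 2 * t)) with hg
    -- derivative of g at 0 is k * h
    have hgd : HasDerivAt g (k * h) 0 := by
      have h1 : HasDerivAt (fun t : ℝ => h / 2 * t) (h / 2) 0 := by
        simpa using (hasDerivAt_id (0 : ℝ)).const_mul (h / 2)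
      have h2 : HasDerivAt Real.arcsin (1 / Real.sqrt (1 - (h / 2 * 0) ^ 2)) (h / 2 * 0) :=
        Real.hasDerivAt_arcsin (by norm_num) (by norm_num)
      have h3 := (h2.comp 0 h1).const_mul (2 * k)
      have h4 : HasDerivAt Real.sin (Real.cos (2 * k * Real.arcsin (h / 2 * 0)))
          (2 * k * Real.arcsin (h / 2 * 0)) := Real.hasDerivAt_sin _
      have h5 := h4.comp 0 h3
      refine h5.congr_deriv ?_
      simp [Real.arcsin_zero]
      ring
    have hslope : Tendsto (slope g 0) (nhdsWithin 0 {x : ℝ | x ≠ 0}) (nhds (k * h)) :=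
      hasDerivAt_iff_tendsto_slope.mp hgd
    -- sqrt tends into punctured neighborhood
    have hsqrt : Tendsto (fun l : ℝ => Real.sqrt l) 𝓕 (nhdsWithin 0 {x : ℝ | x ≠ 0}) := by
      rw [tendsto_nhdsWithin_iff]
      constructor
      · have := (Real.continuous_sqrt.tendsto 0).mono_left (nhdsWithin_le_nhds (s := S))
        simpa using this
      · filter_upwards [self_mem_nhdsWithin] with l hl
        exact ne_of_gt (Real.sqrt_pos.mpr hl.1)
    have T1 : Tendsto (fun l : ℝ => g (Real.sqrt l) / Real.sqrt l) 𝓕 (nhds (k * h)) := by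
      have := hslope.comp hsqrt
      refine this.congr fun l => ?_
      have hg0 : g 0 = 0 := by simp [hg]
      show slope g 0 (Real.sqrt l) = _
      rw [slope_def_field, hg0, sub_zero, sub_zero]
    have T2 : Tendsto (fun l : ℝ => Real.sqrt (4 / h ^ 2 - l)) 𝓕 (nhds (2 / h)) := by
      have hc : Tendsto (fun l : ℝ => Real.sqrt (4 / h ^ 2 - l)) (nhds 0)
          (nhds (Real.sqrt (4 / h ^ 2 - 0))) :=
        (Real.continuous_sqrt.comp (continuous_const.sub continuous_id)).tendsto 0
      have he : Real.sqrt (4 / h ^ 2 - 0) = 2 / h := by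
        rw [sub_zero, show (4 : ℝ) / h ^ 2 = (2 / h) ^ 2 by field_simp; ring,
          Real.sqrt_sq (by positivity)]
      rw [he] at hc
      exact hc.mono_left nhdsWithin_le_nhds
    have h2h : (2 : ℝ) / h ≠ 0 := by positivity
    have TQ : Tendsto (fun l : ℝ =>
        Real.sin (2 * k * Real.arcsin (h / 2 * Real.sqrt l)) /
          (Real.sqrt l * Real.sqrt (4 / h ^ 2 - l))) 𝓕 (nhds (k * h / (2 / h))) := by
      have := T1.div T2 h2h
      refine this.congr fun l => ?_
      show g (Real.sqrt l) / Real.sqrt l / Real.sqrt (4 / h ^ 2 - l) = _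
      rw [div_div]
    have Tfull := ((TQ.sub_const (h ^ 2 / 2 * k)).pow 2).const_mul
      ((1 + (p.1 : ℝ) ^ 2) ^ (-(ν / 2)) * (1 + (p.2 : ℝ) ^ 2) ^ (-(ν / 2)))
    have hval : (1 + (p.1 : ℝ) ^ 2) ^ (-(ν / 2)) * (1 + (p.2 : ℝ) ^ 2) ^ (-(ν / 2)) *
        (k * h / (2 / h) - h ^ 2 / 2 * k) ^ 2 = 0 := by
      have : k * h / (2 / h) - h ^ 2 / 2 * k = 0 := by field_simp; ring
      rw [this]; simp
    rw [hval] at Tfull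
    exact Tfull
  -- the eventual bound
  have hbound : ∀ᶠ l in 𝓕, ∀ p : ℤ × ℤ,
      ‖(1 + (p.1 : ℝ) ^ 2) ^ (-(ν / 2)) * (1 + (p.2 : ℝ) ^ 2) ^ (-(ν / 2)) *
        (Real.sin (2 * ((|p.1 - p.2| : ℤ) : ℝ) * Real.arcsin (h / 2 * Real.sqrt l)) /
            (Real.sqrt l * Real.sqrt (4 / h ^ 2 - l)) -
          h ^ 2 / 2 * ((|p.1 - p.2| : ℤ) : ℝ)) ^ 2‖ ≤ B p := by
    have hmem : S ∈ 𝓕 := self_mem_nhdsWithin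
    have hsmall : {l : ℝ | l < 2 / h ^ 2} ∈ 𝓕 :=
      nhdsWithin_le_nhds (Iio_mem_nhds (by positivity))
    filter_upwards [hmem, hsmall] with l hl hl2
    intro p
    set k : ℝ := ((|p.1 - p.2| : ℤ) : ℝ) with hk
    have hk0 : 0 ≤ k := by positivity
    have hl0 : 0 < l := hl.1
    have hl4 : l < 4 / h ^ 2 := hl.2
    set x : ℝ := h / 2 * Real.sqrt l with hx
    have hx0 : 0 ≤ x := by positivity
    have hx1 : x ≤ 1 := by
      have : x ^ 2 ≤ 1 := by
        have : x ^ 2 = h ^ 2 / 4 * l := by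
          rw [hx, mul_pow, Real.sq_sqrt hl0.le]; ring
        rw [this]
        rw [lt_div_iff₀ hh2] at hl4
        nlinarith
      nlinarith [hx0]
    set a : ℝ := Real.arcsin x with ha
    have ha0 : 0 ≤ a := Real.arcsin_nonneg.mpr hx0
    have hapi : a ≤ Real.pi / 2 := Real.arcsin_le_pi_div_two x
    have hsina : Real.sin a = x := Real.sin_arcsin (by linarith) hx1
    have hax : a ≤ Real.pi / 2 * x := by
      have := Real.mul_le_sin ha0 hapi
      rw [hsina] at this
      have hpi : 0 < Real.pi := Real.pi_pos
      rw [div_mul_eq_mul_div, div_le_iff₀ hpi] at this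
      nlinarith
    -- bound the sine quotient
    have hl2' : l * h ^ 2 < 2 := (lt_div_iff₀ hh2).mp hl2
    have hsd : Real.sqrt (1 / h ^ 2) ≤ Real.sqrt (4 / h ^ 2 - l) := by
      apply Real.sqrt_le_sqrt
      have hkey : 4 / h ^ 2 - l - 1 / h ^ 2 = (3 - l * h ^ 2) / h ^ 2 := by
        field_simp; ring
      have : (0:ℝ) ≤ (3 - l * h ^ 2) / h ^ 2 := div_nonneg (by linarith) hh2.le
      linarith
    have hsd1 : 1 / h ≤ Real.sqrt (4 / h ^ 2 - l) := by
      calc 1 / h = Real.sqrt (1 / h ^ 2) := by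
            rw [show (1 : ℝ) / h ^ 2 = (1 / h) ^ 2 by ring, Real.sqrt_sq (by positivity)]
        _ ≤ _ := hsd
    have hsdpos : 0 < Real.sqrt (4 / h ^ 2 - l) := lt_of_lt_of_le (by positivity) hsd1
    have hslpos : 0 < Real.sqrt l := Real.sqrt_pos.mpr hl0
    have hsin : |Real.sin (2 * k * a)| ≤ 2 * k * a := by
      have := Real.abs_sin_le_abs (x := 2 * k * a)
      rwa [abs_of_nonneg (mul_nonneg (mul_nonneg (by norm_num) hk0) ha0)] at this
    have hquot : |Real.sin (2 * k * a) / (Real.sqrt l * Real.sqrt (4 / h ^ 2 - l))|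
        ≤ Real.pi * h ^ 2 * k / 2 := by
      rw [abs_div, abs_of_nonneg (by positivity : (0:ℝ) ≤ Real.sqrt l * Real.sqrt (4 / h ^ 2 - l))]
      rw [div_le_iff₀ (by positivity)]
      calc |Real.sin (2 * k * a)| ≤ 2 * k * a := hsin
        _ ≤ 2 * k * (Real.pi / 2 * x) := by
            apply mul_le_mul_of_nonneg_left hax (by positivity)
        _ = Real.pi * k * (h / 2) * Real.sqrt l := by rw [hx]; ring
        _ ≤ Real.pi * h ^ 2 * k / 2 * (Real.sqrt l * Real.sqrt (4 / h ^ 2 - l)) := by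
            have h1 : Real.pi * k * (h / 2) * Real.sqrt l
                = (Real.pi * h ^ 2 * k / 2) * (Real.sqrt l * (1 / h)) := by
              field_simp
            rw [h1]
            apply mul_le_mul_of_nonneg_left _ (by positivity)
            exact mul_le_mul_of_nonneg_left hsd1 hslpos.le
    have hD : |Real.sin (2 * k * a) / (Real.sqrt l * Real.sqrt (4 / h ^ 2 - l))
        - h ^ 2 / 2 * k| ≤ C * k := by
      calc |Real.sin (2 * k * a) / (Real.sqrt l * Real.sqrt (4 / h ^ 2 - l)) - h ^ 2 / 2 * k|
          ≤ |Real.sin (2 * k * a) / (Real.sqrt l * Real.sqrt (4 / h ^ 2 - l))|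
            + |h ^ 2 / 2 * k| := abs_sub _ _
        _ ≤ Real.pi * h ^ 2 * k / 2 + h ^ 2 / 2 * k := by
            refine add_le_add hquot ?_
            rw [abs_of_nonneg (by positivity)]
        _ ≤ C * k := by
            rw [hC]
            have h4 : Real.pi * (h ^ 2 * k) ≤ 4 * (h ^ 2 * k) :=
              mul_le_mul_of_nonneg_right Real.pi_le_four (mul_nonneg hh2.le hk0)
            nlinarith [h4]
    -- assemble
    have hW1 : (0:ℝ) ≤ (1 + (p.1 : ℝ) ^ 2) ^ (-(ν / 2)) := Real.rpow_nonneg (by positivity) _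
    have hW2 : (0:ℝ) ≤ (1 + (p.2 : ℝ) ^ 2) ^ (-(ν / 2)) := Real.rpow_nonneg (by positivity) _
    rw [Real.norm_eq_abs, abs_of_nonneg (by positivity)]
    have hsq : (Real.sin (2 * k * a) / (Real.sqrt l * Real.sqrt (4 / h ^ 2 - l))
        - h ^ 2 / 2 * k) ^ 2 ≤ (C * k) ^ 2 := by
      rw [← sq_abs]
      apply pow_le_pow_left₀ (abs_nonneg _) hD
    have hkk : k ^ 2 ≤ 2 * ((1 + (p.1 : ℝ) ^ 2) * (1 + (p.2 : ℝ) ^ 2)) := by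
      have hkval : k = |((p.1 : ℝ) - (p.2 : ℝ))| := by
        rw [hk, Int.cast_abs]; push_cast; ring
      rw [hkval, sq_abs]
      nlinarith [sq_nonneg ((p.1 : ℝ) + (p.2 : ℝ)), sq_nonneg ((p.1 : ℝ) * (p.2 : ℝ)),
        sq_nonneg ((p.1 : ℝ) - (p.2 : ℝ))]
    calc (1 + (p.1 : ℝ) ^ 2) ^ (-(ν / 2)) * (1 + (p.2 : ℝ) ^ 2) ^ (-(ν / 2)) *
          (Real.sin (2 * k * a) / (Real.sqrt l * Real.sqrt (4 / h ^ 2 - l))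
            - h ^ 2 / 2 * k) ^ 2
        ≤ (1 + (p.1 : ℝ) ^ 2) ^ (-(ν / 2)) * (1 + (p.2 : ℝ) ^ 2) ^ (-(ν / 2)) * (C * k) ^ 2 :=
          mul_le_mul_of_nonneg_left hsq (by positivity)
      _ ≤ (1 + (p.1 : ℝ) ^ 2) ^ (-(ν / 2)) * (1 + (p.2 : ℝ) ^ 2) ^ (-(ν / 2)) *
            (C ^ 2 * (2 * ((1 + (p.1 : ℝ) ^ 2) * (1 + (p.2 : ℝ) ^ 2)))) := by
          apply mul_le_mul_of_nonneg_left _ (by positivity)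
          rw [mul_pow]
          apply mul_le_mul_of_nonneg_left hkk (by positivity)
      _ = B p := by
          simp only [hB]
          have e1 : (1 + (p.1 : ℝ) ^ 2) ^ (-(ν / 2) + 1)
              = (1 + (p.1 : ℝ) ^ 2) ^ (-(ν / 2)) * (1 + (p.1 : ℝ) ^ 2) := by
            rw [Real.rpow_add_one (by positivity : (0:ℝ) < 1 + (p.1 : ℝ) ^ 2).ne']
          have e2 : (1 + (p.2 : ℝ) ^ 2) ^ (-(ν / 2) + 1)
              = (1 + (p.2 : ℝ) ^ 2) ^ (-(ν / 2)) * (1 + (p.2 : ℝ) ^ 2) := by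
            rw [Real.rpow_add_one (by positivity : (0:ℝ) < 1 + (p.2 : ℝ) ^ 2).ne']
          rw [e1, e2]; ring
  have := tendsto_tsum_of_dominated_convergence (g := fun _ : ℤ × ℤ => (0:ℝ)) hBsum hlim hbound
  simpa using this
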